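/- Fix an integer constant c ≥ 3 and functions a, b : ℕ → ℕ with a(m) = o(m^{1/c} · log m) and b(m) = o(m^{1−2/c}). Then for all sufficiently large p, writing n = p^c and m = p^c − p, there is no (a(m), b(m))-BAPO that solves Reachability on all instances consisting of the edge list of a directed graph with n nodes and m edges followed by a source and a target node. -/

import Mathlib

open Finset Filter Asymptotics

/-- An `(a, b)`-BAPO (bounded attention prefix oracle): a prefix oracle `f` outputting
`a` bits, a binary attention function `g`, and a suffix oracle `h` that receives the
prefix-oracle output, an attended set of at most `b` (token, 1-based index) pairs from
the prefix, the suffix, and the split index. -/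
structure BAPO (Sigma : Type) (Out : Type) (a b : ℕ) where
  f : List Sigma → (Fin a → Bool)
  g : List Sigma → ℕ → Sigma → ℕ → Bool
  h : (Fin a → Bool) → Finset (Sigma × ℕ) → List Sigma → ℕ → Out

namespace BAPO

variable {Sigma Out : Type} {a b : ℕ}

/-- The set `𝔾 = {(xᵢ, i) : 1 ≤ i ≤ k, g(suffix, k, xᵢ, i) = 1}` of attended
candidates for a given prefix and suffix. -/
noncomputable def cands (M : BAPO Sigma Out a b) (pre suf : List Sigma) :
    Finset (Sigma × ℕ) :=
  letI := Classical.decEq Sigma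
  (Finset.univ.filter fun i : Fin pre.length =>
      M.g suf pre.length (pre.get i) ((i : ℕ) + 1) = true).image
    fun i => (pre.get i, (i : ℕ) + 1)

/-- The BAPO outputs `y` on input `x`: for every split index `k < |x|` and every
attended set `G ⊆ 𝔾` with `|G| = min b |𝔾|`, the suffix oracle outputs `y`. -/
def SolvesOn (M : BAPO Sigma Out a b) (x : List Sigma) (y : Out) : Prop :=
  ∀ k, k < x.length →
    ∀ G : Finset (Sigma × ℕ), G ⊆ M.cands (x.take k) (x.drop k) →
      G.card = min b (M.cands (x.take k) (x.drop k)).card →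
      M.h (M.f (x.take k)) G (x.drop k) k = y

/-- The BAPO outputs a *correct* answer (one satisfying `good`) on input `x`:
for every split index `k < |x|` and every attended set `G ⊆ 𝔾` with
`|G| = min b |𝔾|`, the suffix oracle's output satisfies `good`. -/
def SolvesOnP (M : BAPO Sigma Out a b) (x : List Sigma) (good : Out → Prop) : Prop :=
  ∀ k, k < x.length →
    ∀ G : Finset (Sigma × ℕ), G ⊆ M.cands (x.take k) (x.drop k) →
      G.card = min b (M.cands (x.take k) (x.drop k)).card →
      good (M.h (M.f (x.take k)) G (x.drop k) k)

end BAPO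

/-- Directed `s`–`t` reachability in a graph given as an edge list. -/
def EdgeListReachable {n : ℕ} (edges : List (Fin n × Fin n)) (s t : Fin n) : Prop :=
  Relation.ReflTransGen (fun u v => (u, v) ∈ edges) s t

namespace ReachHard

/-! ### Abstract greedy bait/dodge classification -/

lemma greedy (u B : ℕ) (Att : Fin u → ℕ → Fin u → Bool → Bool) (Spare : Finset ℕ) :
    ∃ F : Finset (ℕ × Fin u × Bool),
      (∀ x ∈ F, x.1 ∈ Spare) ∧
      (∀ x ∈ F, ∀ y ∈ F, x.1 = y.1 → x = y) ∧
      F.card ≤ u * B ∧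
      ∀ i : Fin u,
        B ≤ (F.filter (fun x : ℕ × Fin u × Bool => Att i x.1 x.2.1 x.2.2 = true)).card ∨
        ∀ r ∈ Spare, (∀ x ∈ F, x.1 ≠ r) → ∀ j bit, Att i r j bit = false := by
  classical
  set srv : Finset (ℕ × Fin u × Bool) → Fin u → ℕ :=
    fun F i => (F.filter (fun x => Att i x.1 x.2.1 x.2.2 = true)).card with hsrv
  set meas : Finset (ℕ × Fin u × Bool) → ℕ :=
    fun F => ∑ i : Fin u, (B - srv F i) with hmeas
  suffices H : ∀ d (F : Finset (ℕ × Fin u × Bool)),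
      (∀ x ∈ F, x.1 ∈ Spare) → (∀ x ∈ F, ∀ y ∈ F, x.1 = y.1 → x = y) →
      F.card + meas F ≤ u * B → meas F ≤ d →
      ∃ F' : Finset (ℕ × Fin u × Bool),
        (∀ x ∈ F', x.1 ∈ Spare) ∧ (∀ x ∈ F', ∀ y ∈ F', x.1 = y.1 → x = y) ∧
        F'.card ≤ u * B ∧
        ∀ i : Fin u,
          B ≤ srv F' i ∨
          ∀ r ∈ Spare, (∀ x ∈ F', x.1 ≠ r) → ∀ j bit, Att i r j bit = false by
    have h0 : meas (∅ : Finset (ℕ × Fin u × Bool)) ≤ u * B := by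
      simp only [hmeas, hsrv]
      calc ∑ _i : Fin u, (B - (Finset.filter _ ∅).card) ≤ ∑ _i : Fin u, B :=
            Finset.sum_le_sum (fun i _ => Nat.sub_le _ _)
        _ = u * B := by simp [Finset.sum_const, mul_comm]
    obtain ⟨F', h1, h2, h3, h4⟩ := H (u * B) ∅ (by simp) (by simp) (by simpa using h0) h0
    exact ⟨F', h1, h2, h3, h4⟩
  intro d
  induction d with
  | zero =>
    intro F hS hI hC hm
    refine ⟨F, hS, hI, by omega, fun i => Or.inl ?_⟩
    have : B - srv F i = 0 := by
      have := Finset.sum_eq_zero_iff.mp (Nat.le_zero.mp hm) i (Finset.mem_univ i)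
      exact this
    omega
  | succ d ih =>
    intro F hS hI hC hm
    by_cases hfin : ∀ i : Fin u,
        B ≤ srv F i ∨ ∀ r ∈ Spare, (∀ x ∈ F, x.1 ≠ r) → ∀ j bit, Att i r j bit = false
    · exact ⟨F, hS, hI, by omega, hfin⟩
    · push_neg at hfin
      obtain ⟨i, hi1, r, hrS, hrF, j, bit, hAtt0⟩ := hfin
      have hAtt : Att i r j bit = true := by
        cases hb : Att i r j bit
        · exact absurd hb hAtt0
        · rfl
      set F' := insert (r, j, bit) F with hF'
      have hnew : (r, j, bit) ∉ F := fun h => (hrF _ h) rfl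
      have hcard : F'.card = F.card + 1 := Finset.card_insert_of_notMem hnew
      have hsrvmono : ∀ i', srv F i' ≤ srv F' i' := by
        intro i'
        apply Finset.card_le_card
        exact Finset.filter_subset_filter _ (Finset.subset_insert _ _)
      have hsrvi : srv F i + 1 ≤ srv F' i := by
        have : insert (r, j, bit) (F.filter (fun x => Att i x.1 x.2.1 x.2.2 = true)) ⊆
            F'.filter (fun x => Att i x.1 x.2.1 x.2.2 = true) := by
          intro x hx
          rcases Finset.mem_insert.mp hx with h | h
          · subst h; exact Finset.mem_filter.mpr ⟨Finset.mem_insert_self _ _, hAtt⟩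
          · exact Finset.filter_subset_filter _ (Finset.subset_insert _ _) h
        have hcard2 := Finset.card_le_card this
        rwa [Finset.card_insert_of_notMem (fun h => hnew (Finset.mem_filter.mp h).1)] at hcard2
      have hmeas' : meas F' + 1 ≤ meas F := by
        simp only [hmeas]
        calc (∑ i' : Fin u, (B - srv F' i')) + 1
            ≤ (∑ i' ∈ Finset.univ \ {i}, (B - srv F' i')) + ((B - srv F' i) + 1) := by
              rw [Finset.sum_eq_sum_sdiff_singleton_add (Finset.mem_univ i)]; omega
          _ ≤ (∑ i' ∈ Finset.univ \ {i}, (B - srv F i')) + (B - srv F i) := by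
              gcongr with i' hi'
              · exact hsrvmono i'
              · omega
          _ = ∑ i' : Fin u, (B - srv F i') := by
              rw [Finset.sum_eq_sum_sdiff_singleton_add (Finset.mem_univ i) (fun i' => B - srv F i')]
      apply ih F'
      · intro x hx
        rcases Finset.mem_insert.mp hx with h | h
        · subst h; exact hrS
        · exact hS x h
      · intro x hx y hy hxy
        rcases Finset.mem_insert.mp hx with h | h <;> rcases Finset.mem_insert.mp hy with h' | h'
        · rw [h, h']
        · exfalso; exact hrF y h' (by rw [← hxy, h])
        · exfalso; exact hrF x h (by rw [hxy, h'])
        · exact hI x h y h' hxy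
      · omega
      · omega

/-! ### The adversarial graph family -/

def colorZ (j : ℕ) (bit : Bool) : ℕ := if bit then 3*j+1 else 3*j+2

lemma colorZ_lt {u j : ℕ} (h : j < u) (bit : Bool) : colorZ j bit < 3*u := by
  unfold colorZ; cases bit <;> simp <;> omega

noncomputable def outZ (u : ℕ) (F : Finset (ℕ × Fin u × Bool)) (pr : Fin u → ℕ)
    (w : Fin u → Bool) (r : ℕ) : ℕ :=
  if h : r < 3*u then (if r % 3 = 0 then pr ⟨r/3, by omega⟩ else r)
  else if hb : ∃ x, x ∈ F ∧ x.1 = r then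
    colorZ ((Classical.choose hb).2.1 : ℕ) (Classical.choose hb).2.2
  else if hp : ∃ i, pr i = r then colorZ ((Classical.choose hp : Fin u) : ℕ) (w (Classical.choose hp))
  else r

section OutZ

variable {u : ℕ} {F : Finset (ℕ × Fin u × Bool)} {pr : Fin u → ℕ} {w w' : Fin u → Bool}

lemma outZ_x (i : Fin u) : outZ u F pr w (3*↑i) = pr i := by
  have h : 3*↑i < 3*u := by have := i.isLt; omega
  have h0 : (3*(i:ℕ)) % 3 = 0 := Nat.mul_mod_right 3 _
  rw [outZ, dif_pos h, if_pos h0]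
  congr 1
  apply Fin.ext
  simp [Nat.mul_div_cancel_left _ (by norm_num : (0:ℕ) < 3)]

lemma outZ_self {r : ℕ} (h1 : r < 3*u) (h2 : r % 3 ≠ 0) : outZ u F pr w r = r := by
  rw [outZ, dif_pos h1, if_neg h2]

lemma outZ_bait {x : ℕ × Fin u × Bool} (hx : x ∈ F) (hFS : ∀ y ∈ F, 3*u ≤ y.1)
    (hinj : ∀ y ∈ F, ∀ z ∈ F, y.1 = z.1 → y = z) :
    outZ u F pr w x.1 = colorZ (x.2.1 : ℕ) x.2.2 := by
  have h : ¬ x.1 < 3*u := by have := hFS x hx; omega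
  have hb : ∃ y, y ∈ F ∧ y.1 = x.1 := ⟨x, hx, rfl⟩
  rw [outZ, dif_neg h, dif_pos hb]
  obtain ⟨h1, h2⟩ := Classical.choose_spec hb
  rw [hinj _ h1 _ hx h2]

lemma outZ_pool (i : Fin u) (h3u : 3*u ≤ pr i) (hfresh : ∀ x ∈ F, x.1 ≠ pr i)
    (hprinj : Function.Injective pr) :
    outZ u F pr w (pr i) = colorZ (i : ℕ) (w i) := by
  have h : ¬ pr i < 3*u := by omega
  have hb : ¬ ∃ x, x ∈ F ∧ x.1 = pr i := by
    rintro ⟨x, hx, hx1⟩; exact hfresh x hx hx1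
  have hp : ∃ j, pr j = pr i := ⟨i, rfl⟩
  rw [outZ, dif_neg h, dif_neg hb, dif_pos hp]
  have := Classical.choose_spec hp
  rw [hprinj this]

lemma outZ_congr {r : ℕ} (h : ∀ i, pr i ≠ r) : outZ u F pr w r = outZ u F pr w' r := by
  have hp : ¬ ∃ i, pr i = r := by rintro ⟨i, hi⟩; exact h i hi
  rw [outZ, outZ]
  by_cases h1 : r < 3*u
  · rw [dif_pos h1, dif_pos h1]
  · by_cases h2 : ∃ x, x ∈ F ∧ x.1 = r
    · rw [dif_neg h1, dif_neg h1, dif_pos h2, dif_pos h2]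
    · rw [dif_neg h1, dif_neg h1, dif_neg h2, dif_neg h2, dif_neg hp, dif_neg hp]

lemma outZ_lt {m r : ℕ} (hprlt : ∀ i, pr i < m)
    (h3um : 3*u ≤ m) (hr : r < m) : outZ u F pr w r < m := by
  rw [outZ]
  split_ifs with h1 h2 h3 h4
  · exact hprlt _
  · exact hr
  · exact lt_of_lt_of_le (colorZ_lt (Classical.choose h3).2.1.isLt _) h3um
  · exact lt_of_lt_of_le (colorZ_lt (Classical.choose h4).isLt _) h3um
  · exact hr

end OutZ

lemma cands_spec {Sg Out : Type} {A Bb : ℕ} (M : BAPO Sg Out A Bb) {m : ℕ}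
    (f : Fin m → Sg) (suf : List Sg) (t : Sg) (q : ℕ) :
    (t, q) ∈ M.cands (List.ofFn f) suf ↔
      ∃ i : Fin m, t = f i ∧ q = (i : ℕ) + 1 ∧ M.g suf m (f i) ((i : ℕ) + 1) = true := by
  classical
  have hl : (List.ofFn f).length = m := List.length_ofFn (f := f)
  have hgen : ∀ (x : Sg) (p : ℕ), M.g suf (List.ofFn f).length x p = M.g suf m x p := by
    intro x p; rw [hl]
  unfold BAPO.cands
  rw [Finset.mem_image]
  constructor
  · rintro ⟨j, hj, hpair⟩
    rw [Finset.mem_filter] at hj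
    obtain ⟨-, hg⟩ := hj
    injection hpair with ht hq
    rw [List.get_ofFn] at ht hg
    refine ⟨Fin.cast hl j, ?_, ?_, ?_⟩
    · rw [← ht]
    · rw [← hq]; simp
    · rw [← hgen]; exact hg
  · rintro ⟨i, ht, hq, hg⟩
    refine ⟨Fin.cast hl.symm i, ?_, ?_⟩
    · rw [Finset.mem_filter]
      refine ⟨Finset.mem_univ _, ?_⟩
      rw [List.get_ofFn, hgen]
      exact hg
    · rw [List.get_ofFn, ht, hq]; rfl

/-! ### The key finite lemma -/

lemma key (n m A Bb : ℕ) (hmn : m ≤ n) (hcap : (A+1) * Bb + (A+1) * 4 ≤ m)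
    (M : BAPO ((Fin n × Fin n) ⊕ Fin n) Bool A Bb) :
    ¬ ∀ edges : List (Fin n × Fin n),
        edges.Nodup → edges.length = m →
        ∀ s t : Fin n,
          (EdgeListReachable edges s t →
            M.SolvesOn (edges.map Sum.inl ++ [Sum.inr s, Sum.inr t]) true) ∧
          (¬ EdgeListReachable edges s t →
            M.SolvesOn (edges.map Sum.inl ++ [Sum.inr s, Sum.inr t]) false) := by
  classical
  intro hM
  set u := A + 1 with hu
  obtain ⟨tB, htB⟩ : ∃ t, u * Bb = t := ⟨_, rfl⟩
  have hcap' : tB + u * 4 ≤ m := by rw [← htB]; exact hcap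
  have h3um : 3*u ≤ m := by omega
  have hn0 : 0 < n := by omega
  set fn : ℕ → Fin n := fun k => ⟨k % n, Nat.mod_lt _ hn0⟩ with hfn
  have fn_val : ∀ k, k < n → ((fn k : Fin n) : ℕ) = k := fun k hk => Nat.mod_eq_of_lt hk
  have fn_val_m : ∀ k, k < m → ((fn k : Fin n) : ℕ) = k :=
    fun k hk => fn_val k (lt_of_lt_of_le hk hmn)
  set SufL : Fin u → List ((Fin n × Fin n) ⊕ Fin n) :=
    fun i => [Sum.inr (fn (3*↑i)), Sum.inr (fn (3*↑i+1))] with hSufL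
  set Att : Fin u → ℕ → Fin u → Bool → Bool :=
    fun i r j bit => M.g (SufL i) m (Sum.inl (fn r, fn (colorZ (↑j) bit))) (r+1) with hAttD
  set Spare : Finset ℕ := (Finset.range m).filter (fun r => 3*u ≤ r) with hSpD
  have hSpare_mem : ∀ r, r ∈ Spare ↔ (r < m ∧ 3*u ≤ r) := by
    intro r; rw [hSpD]; simp [Finset.mem_filter, Finset.mem_range]
  have hSpare_card : m - 3*u ≤ Spare.card := by
    have hsub : Finset.range m \ Finset.range (3*u) ⊆ Spare := by
      intro r hr
      rw [Finset.mem_sdiff, Finset.mem_range, Finset.mem_range] at hr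
      rw [hSpare_mem]; omega
    calc m - 3*u = (Finset.range m).card - (Finset.range (3*u)).card := by
            rw [Finset.card_range, Finset.card_range]
      _ ≤ (Finset.range m \ Finset.range (3*u)).card := Finset.le_card_sdiff _ _
      _ ≤ Spare.card := Finset.card_le_card hsub
  obtain ⟨F, hFS, hFinj, hFcard, hclass⟩ := greedy u Bb Att Spare
  have hF3u : ∀ x ∈ F, 3*u ≤ x.1 := fun x hx => ((hSpare_mem _).mp (hFS x hx)).2
  have hFm : ∀ x ∈ F, x.1 < m := fun x hx => ((hSpare_mem _).mp (hFS x hx)).1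
  -- pool rows
  set avail : Finset ℕ := Spare.filter (fun r => ∀ x ∈ F, x.1 ≠ r) with havD
  have havail : u ≤ avail.card := by
    have hsub : Spare \ F.image (fun x => x.1) ⊆ avail := by
      intro r hr
      rw [Finset.mem_sdiff] at hr
      rw [havD, Finset.mem_filter]
      refine ⟨hr.1, fun x hx hxr => hr.2 ?_⟩
      rw [Finset.mem_image]; exact ⟨x, hx, hxr⟩
    have h1 : (F.image (fun x => x.1)).card ≤ tB := by
      rw [← htB]; exact le_trans Finset.card_image_le hFcard
    have h2 := Finset.le_card_sdiff (F.image (fun x => x.1)) Spare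
    have h3 := Finset.card_le_card hsub
    omega
  obtain ⟨T, hTsub, hTcard⟩ := Finset.exists_subset_card_eq havail
  set prE := Finset.equivFinOfCardEq hTcard with hprE
  set pr : Fin u → ℕ := fun i => ↑(prE.symm i) with hprD
  have hpr_mem : ∀ i, pr i ∈ avail := fun i => hTsub (prE.symm i).2
  have hpr_inj : Function.Injective pr := by
    intro i j hij
    have h1 : prE.symm i = prE.symm j := Subtype.ext hij
    exact prE.symm.injective h1
  have hpr_f : ∀ i, pr i ∈ Spare ∧ ∀ x ∈ F, x.1 ≠ pr i := by
    intro i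
    have := hpr_mem i
    rw [havD, Finset.mem_filter] at this
    exact this
  have hpr_m : ∀ i, pr i < m := fun i => ((hSpare_mem _).mp (hpr_f i).1).1
  have hpr_3u : ∀ i, 3*u ≤ pr i := fun i => ((hSpare_mem _).mp (hpr_f i).1).2
  -- the edge lists
  have hout_lt : ∀ (w : Fin u → Bool) r, r < m → outZ u F pr w r < m :=
    fun w r hr => outZ_lt hpr_m h3um hr
  set eL : (Fin u → Bool) → List (Fin n × Fin n) :=
    fun w => List.ofFn (fun i : Fin m => (fn ↑i, fn (outZ u F pr w ↑i))) with heLD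
  have hlen : ∀ w, (eL w).length = m := fun w => List.length_ofFn
  have hnodup : ∀ w, (eL w).Nodup := by
    intro w
    rw [heLD, List.nodup_ofFn]
    intro i j hij
    have h1 : fn (↑i) = fn (↑j) := congrArg Prod.fst hij
    have h2 : ((fn (↑i) : Fin n) : ℕ) = ((fn (↑j) : Fin n) : ℕ) := congrArg _ h1
    rw [fn_val_m _ i.isLt, fn_val_m _ j.isLt] at h2
    exact Fin.ext h2
  set tok : (Fin u → Bool) → Fin m → ((Fin n × Fin n) ⊕ Fin n) :=
    fun w i => Sum.inl (fn ↑i, fn (outZ u F pr w ↑i)) with htokD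
  have hmap : ∀ w, (eL w).map Sum.inl = List.ofFn (fun i => tok w i) := by
    intro w; rw [heLD, List.map_ofFn]; rfl
  have hmemE : ∀ (w : Fin u → Bool) (x y : Fin n),
      ((x, y) ∈ eL w) ↔ ∃ r : Fin m, x = fn ↑r ∧ y = fn (outZ u F pr w ↑r) := by
    intro w x y
    rw [heLD, List.mem_ofFn']
    constructor
    · rintro ⟨r, hr⟩
      simp only at hr
      injection hr with hr1 hr2
      exact ⟨r, hr1.symm, hr2.symm⟩
    · rintro ⟨r, hx, hy⟩
      exact ⟨r, by rw [hx, hy]⟩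
  -- reachability
  have hreach_t : ∀ (w : Fin u → Bool) (i : Fin u), w i = true →
      EdgeListReachable (eL w) (fn (3*↑i)) (fn (3*↑i+1)) := by
    intro w i hwi
    have hiu : (i:ℕ) < u := i.isLt
    have h3i : 3*↑i < m := by omega
    have e1 : (fn (3*↑i), fn (pr i)) ∈ eL w := by
      rw [hmemE]
      refine ⟨⟨3*↑i, h3i⟩, rfl, ?_⟩
      congr 1
      exact (outZ_x i).symm
    have e2 : (fn (pr i), fn (3*↑i+1)) ∈ eL w := by
      rw [hmemE]
      refine ⟨⟨pr i, hpr_m i⟩, rfl, ?_⟩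
      congr 1
      rw [outZ_pool i (hpr_3u i) (hpr_f i).2 hpr_inj, colorZ, hwi]
      simp
    exact Relation.ReflTransGen.head e1 (Relation.ReflTransGen.head e2 Relation.ReflTransGen.refl)
  have hreach_f : ∀ (w : Fin u → Bool) (i : Fin u), w i = false →
      ¬ EdgeListReachable (eL w) (fn (3*↑i)) (fn (3*↑i+1)) := by
    intro w i hwi hre
    have hiu : (i:ℕ) < u := i.isLt
    have hkey : ∀ v : Fin n, Relation.ReflTransGen (fun a b => (a, b) ∈ eL w) (fn (3*↑i)) v →
        ((v:ℕ) = 3*↑i ∨ (v:ℕ) = pr i ∨ (v:ℕ) = 3*↑i+2) := by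
      intro v hv
      induction hv with
      | refl =>
        left; exact fn_val_m _ (by omega)
      | @tail b c hab hbc ih =>
        obtain ⟨r, hbr, hcr⟩ := (hmemE w b c).mp hbc
        have hbval : (b:ℕ) = ↑r := by rw [hbr]; exact fn_val_m _ r.isLt
        have hcval : (c:ℕ) = outZ u F pr w ↑r := by
          rw [hcr]; exact fn_val_m _ (hout_lt w _ r.isLt)
        rcases ih with h | h | h
        · have hr3 : (r:ℕ) = 3*↑i := by omega
          right; left
          rw [hcval, hr3, outZ_x i]
        · have hrp : (r:ℕ) = pr i := by omega
          right; right
          rw [hcval, hrp, outZ_pool i (hpr_3u i) (hpr_f i).2 hpr_inj, colorZ, hwi]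
          simp
        · have hr3 : (r:ℕ) = 3*↑i+2 := by omega
          right; right
          rw [hcval, hr3, outZ_self (by omega) (by omega)]
    have hfin := hkey _ hre
    rw [fn_val_m _ (by omega)] at hfin
    have h3 := hpr_3u i
    omega
  -- pigeonhole on the prefix oracle
  have hcard2 : Fintype.card (Fin A → Bool) < Fintype.card (Fin u → Bool) := by
    rw [Fintype.card_fun, Fintype.card_fun]
    simp only [Fintype.card_fin, Fintype.card_bool]
    exact Nat.pow_lt_pow_right one_lt_two (by omega)
  obtain ⟨w1, w2, hw12, hfeq⟩ :=
    Fintype.exists_ne_map_eq_of_card_lt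
      (fun w : Fin u → Bool => M.f ((eL w).map Sum.inl)) hcard2
  obtain ⟨i0, hi0⟩ := Function.ne_iff.mp hw12
  -- the final contradiction, for any pair with differing answers and equal f-values
  have contra : ∀ (wa wb : Fin u → Bool), wa i0 = true → wb i0 = false →
      M.f ((eL wa).map Sum.inl) = M.f ((eL wb).map Sum.inl) → False := by
    intro wa wb hwa hwb hfe
    have hSa : M.SolvesOn ((eL wa).map Sum.inl ++ SufL i0) true :=
      (hM (eL wa) (hnodup wa) (hlen wa) (fn (3*↑i0)) (fn (3*↑i0+1))).1 (hreach_t wa i0 hwa)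
    have hSb : M.SolvesOn ((eL wb).map Sum.inl ++ SufL i0) false :=
      (hM (eL wb) (hnodup wb) (hlen wb) (fn (3*↑i0)) (fn (3*↑i0+1))).2 (hreach_f wb i0 hwb)
    have hlx : ∀ w : Fin u → Bool, ((eL w).map Sum.inl ++ SufL i0).length = m + 2 := by
      intro w
      rw [List.length_append, List.length_map, hlen w]
      rfl
    have htk : ∀ w : Fin u → Bool, ((eL w).map Sum.inl ++ SufL i0).take m = (eL w).map Sum.inl := by
      intro w
      apply List.take_left'
      rw [List.length_map]; exact hlen w
    have hdk : ∀ w : Fin u → Bool, ((eL w).map Sum.inl ++ SufL i0).drop m = SufL i0 := by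
      intro w
      apply List.drop_left'
      rw [List.length_map]; exact hlen w
    have hklt : ∀ w : Fin u → Bool, m < ((eL w).map Sum.inl ++ SufL i0).length := by
      intro w; rw [hlx]; omega
    rcases hclass i0 with hcl | hdod
    · -- flood: B frozen attended bait tokens
      obtain ⟨G0, hG0sub, hG0card⟩ := Finset.exists_subset_card_eq hcl
      set G : Finset ((((Fin n × Fin n) ⊕ Fin n)) × ℕ) :=
        G0.image (fun x => (Sum.inl (fn x.1, fn (colorZ (x.2.1 : ℕ) x.2.2)), x.1 + 1)) with hGD
      have hGmem : ∀ w : Fin u → Bool, G ⊆ M.cands ((eL w).map Sum.inl) (SufL i0) := by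
        intro w g hg
        rw [hGD, Finset.mem_image] at hg
        obtain ⟨x, hxG0, hxg⟩ := hg
        have hxF : x ∈ F := Finset.filter_subset _ _ (hG0sub hxG0)
        have hxAtt : Att i0 x.1 x.2.1 x.2.2 = true := (Finset.mem_filter.mp (hG0sub hxG0)).2
        have hxm : x.1 < m := hFm x hxF
        rw [hmap w]
        rcases g with ⟨gt, gq⟩
        rw [cands_spec]
        have hob : outZ u F pr w x.1 = colorZ (x.2.1 : ℕ) x.2.2 := outZ_bait hxF hF3u hFinj
        injection hxg with hxg1 hxg2
        refine ⟨⟨x.1, hxm⟩, ?_, ?_, ?_⟩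
        · rw [← hxg1, htokD]
          simp only
          rw [hob]
        · rw [← hxg2]
        · rw [htokD]
          simp only
          rw [hob]
          rw [hAttD] at hxAtt
          exact hxAtt
      have hGcard : G.card = Bb := by
        rw [hGD, Finset.card_image_of_injOn, hG0card]
        intro x hx y hy hxy
        have hx1 : x.1 + 1 = y.1 + 1 := congrArg Prod.snd hxy
        exact hFinj x (Finset.filter_subset _ _ (hG0sub (Finset.mem_coe.mp hx)))
          y (Finset.filter_subset _ _ (hG0sub (Finset.mem_coe.mp hy))) (by omega)
      have hGmin : ∀ w : Fin u → Bool,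
          G.card = min Bb (M.cands ((eL w).map Sum.inl) (SufL i0)).card := by
        intro w
        have h1 : Bb ≤ (M.cands ((eL w).map Sum.inl) (SufL i0)).card := by
          have h2 := Finset.card_le_card (hGmem w); omega
        rw [hGcard, (min_eq_left h1)]
      have ea := hSa m (hklt wa) G (by rw [htk wa, hdk wa]; exact hGmem wa)
        (by rw [htk wa, hdk wa]; exact hGmin wa)
      have eb := hSb m (hklt wb) G (by rw [htk wb, hdk wb]; exact hGmem wb)
        (by rw [htk wb, hdk wb]; exact hGmin wb)
      rw [htk wa, hdk wa, hfe] at ea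
      rw [htk wb, hdk wb] at eb
      rw [ea] at eb
      exact Bool.noConfusion eb
    · -- sparse: the candidate sets agree
      have hdir : ∀ (w w' : Fin u → Bool) (gt : ((Fin n × Fin n) ⊕ Fin n)) (gq : ℕ),
          (∃ i : Fin m, gt = tok w i ∧ gq = (i:ℕ)+1 ∧
            M.g (SufL i0) m (tok w i) ((i:ℕ)+1) = true) →
          (∃ i : Fin m, gt = tok w' i ∧ gq = (i:ℕ)+1 ∧
            M.g (SufL i0) m (tok w' i) ((i:ℕ)+1) = true) := by
        intro w w' gt gq
        rintro ⟨i, ht, hq, hg⟩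
        by_cases hrp : ∃ i', pr i' = (i:ℕ)
        · exfalso
          obtain ⟨i', hi'⟩ := hrp
          have hone : outZ u F pr w (↑i) = colorZ (↑i') (w i') := by
            rw [← hi']; exact outZ_pool i' (hpr_3u i') (hpr_f i').2 hpr_inj
          have hAf := hdod (pr i') (hpr_f i').1 (hpr_f i').2 i' (w i')
          rw [hAttD] at hAf
          simp only at hAf
          rw [htokD] at hg
          simp only at hg
          rw [hone, ← hi'] at hg
          rw [hg] at hAf
          exact Bool.noConfusion hAf
        · have hcg : outZ u F pr w (↑i) = outZ u F pr w' (↑i) :=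
            outZ_congr (fun i' hh => hrp ⟨i', hh⟩)
          have hteq : tok w i = tok w' i := by
            rw [htokD]; simp only; rw [hcg]
          exact ⟨i, by rw [ht, hteq], hq, by rw [← hteq]; exact hg⟩
      have hceq : M.cands ((eL wa).map Sum.inl) (SufL i0) =
          M.cands ((eL wb).map Sum.inl) (SufL i0) := by
        rw [hmap wa, hmap wb]
        apply Finset.ext
        rintro ⟨gt, gq⟩
        rw [cands_spec, cands_spec]
        exact ⟨hdir wa wb gt gq, hdir wb wa gt gq⟩
      obtain ⟨G, hGsub, hGcard⟩ := Finset.exists_subset_card_eq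
        (min_le_right Bb (M.cands ((eL wa).map Sum.inl) (SufL i0)).card)
      have ea := hSa m (hklt wa) G (by rw [htk wa, hdk wa]; exact hGsub)
        (by rw [htk wa, hdk wa]; exact hGcard)
      have eb := hSb m (hklt wb) G (by rw [htk wb, hdk wb, ← hceq]; exact hGsub)
        (by rw [htk wb, hdk wb, ← hceq]; exact hGcard)
      rw [htk wa, hdk wa, hfe] at ea
      rw [htk wb, hdk wb] at eb
      rw [ea] at eb
      exact Bool.noConfusion eb
  cases hb1 : w1 i0
  · cases hb2 : w2 i0
    · rw [hb1, hb2] at hi0; exact hi0 rfl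
    · exact contra w2 w1 hb2 hb1 hfeq.symm
  · cases hb2 : w2 i0
    · exact contra w1 w2 hb1 hb2 hfeq
    · rw [hb1, hb2] at hi0; exact hi0 rfl



lemma arith_evt (c : ℕ) (hc : 3 ≤ c) (a b : ℕ → ℕ)
    (ha : (fun m : ℕ => (a m : ℝ)) =o[atTop]
      fun m : ℕ => (m : ℝ) ^ ((1 : ℝ) / (c : ℝ)) * Real.log m)
    (hb : (fun m : ℕ => (b m : ℝ)) =o[atTop]
      fun m : ℕ => (m : ℝ) ^ (1 - 2 / (c : ℝ))) :
    ∀ᶠ M in atTop, (a M + 1) * (b M + 4) ≤ M := by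
  have hc0 : (0:ℝ) < (c:ℝ) := by
    have : 0 < c := by omega
    exact_mod_cast this
  have hcR3 : (3:ℝ) ≤ (c:ℝ) := by exact_mod_cast hc
  have h1c : (0:ℝ) < 1/(c:ℝ) := by positivity
  have he2 : (0:ℝ) < 1 - 2/(c:ℝ) := by
    have h21 : (2:ℝ)/(c:ℝ) < 1 := by
      rw [div_lt_one hc0]; linarith
    linarith
  have hf1ge : ∀ᶠ M : ℕ in atTop,
      1 ≤ (M:ℝ) ^ ((1:ℝ)/(c:ℝ)) * Real.log M := by
    filter_upwards [eventually_ge_atTop 3] with M hM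
    have hM3 : (3:ℝ) ≤ (M:ℝ) := by exact_mod_cast hM
    have hM1 : (1:ℝ) ≤ (M:ℝ) := by linarith
    have h1 : (1:ℝ) ≤ (M:ℝ) ^ ((1:ℝ)/(c:ℝ)) := Real.one_le_rpow hM1 (le_of_lt h1c)
    have h2 : (1:ℝ) ≤ Real.log M := by
      rw [Real.le_log_iff_exp_le (by linarith)]
      calc Real.exp 1 ≤ 2.7182818286 := le_of_lt Real.exp_one_lt_d9
        _ ≤ (M:ℝ) := by linarith
    nlinarith
  have hf2ge : ∀ᶠ M : ℕ in atTop, 1 ≤ (M:ℝ) ^ (1 - 2/(c:ℝ)) := by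
    filter_upwards [eventually_ge_atTop 1] with M hM
    exact Real.one_le_rpow (by exact_mod_cast hM) (le_of_lt he2)
  have hA : (fun M : ℕ => ((a M : ℝ) + 1)) =O[atTop]
      (fun M : ℕ => (M:ℝ) ^ ((1:ℝ)/(c:ℝ)) * Real.log M) := by
    apply IsBigO.add ha.isBigO
    apply IsBigO.of_bound 1
    filter_upwards [hf1ge] with M h
    rw [Real.norm_eq_abs, Real.norm_eq_abs, abs_of_nonneg (by norm_num : (0:ℝ) ≤ 1),
      abs_of_nonneg (by linarith)]
    linarith
  have hB : (fun M : ℕ => ((b M : ℝ) + 4)) =O[atTop]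
      (fun M : ℕ => (M:ℝ) ^ (1 - 2/(c:ℝ))) := by
    apply IsBigO.add hb.isBigO
    apply IsBigO.of_bound 4
    filter_upwards [hf2ge] with M h
    rw [Real.norm_eq_abs, Real.norm_eq_abs, abs_of_nonneg (by norm_num : (0:ℝ) ≤ 4),
      abs_of_nonneg (by linarith)]
    linarith
  have hAB := hA.mul hB
  have hL : (fun M : ℕ => Real.log M) =o[atTop]
      (fun M : ℕ => (M:ℝ) ^ ((1:ℝ)/(c:ℝ))) :=
    (isLittleO_log_rpow_atTop h1c).comp_tendsto tendsto_natCast_atTop_atTop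
  have hmain : (fun M : ℕ => ((M:ℝ) ^ ((1:ℝ)/(c:ℝ)) * Real.log M) * ((M:ℝ) ^ (1 - 2/(c:ℝ))))
      =o[atTop] (fun M : ℕ => (M:ℝ)) := by
    have h2 : (fun M : ℕ => ((M:ℝ) ^ (1 - 1/(c:ℝ))) * Real.log M) =o[atTop]
        (fun M : ℕ => ((M:ℝ) ^ (1 - 1/(c:ℝ))) * ((M:ℝ) ^ ((1:ℝ)/(c:ℝ)))) :=
      (isBigO_refl (fun M : ℕ => ((M:ℝ) ^ (1 - 1/(c:ℝ)))) atTop).mul_isLittleO hL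
    have h1 : (fun M : ℕ => ((M:ℝ) ^ (1 - 1/(c:ℝ))) * Real.log M) =ᶠ[atTop]
        (fun M : ℕ => ((M:ℝ) ^ ((1:ℝ)/(c:ℝ)) * Real.log M) * ((M:ℝ) ^ (1 - 2/(c:ℝ)))) := by
      filter_upwards [eventually_ge_atTop 1] with M hM
      have hM0 : (0:ℝ) < (M:ℝ) := by
        have : (1:ℝ) ≤ (M:ℝ) := by exact_mod_cast hM
        linarith
      have hmul : (M:ℝ) ^ ((1:ℝ)/(c:ℝ)) * Real.log M * (M:ℝ) ^ (1 - 2/(c:ℝ))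
          = ((M:ℝ) ^ ((1:ℝ)/(c:ℝ)) * (M:ℝ) ^ (1 - 2/(c:ℝ))) * Real.log M := by ring
      rw [hmul, ← Real.rpow_add hM0]
      have hexp : (1:ℝ)/(c:ℝ) + (1 - 2/(c:ℝ)) = 1 - 1/(c:ℝ) := by ring
      rw [hexp]
    have h3 : (fun M : ℕ => ((M:ℝ) ^ (1 - 1/(c:ℝ))) * ((M:ℝ) ^ ((1:ℝ)/(c:ℝ)))) =ᶠ[atTop]
        (fun M : ℕ => (M:ℝ)) := by
      filter_upwards [eventually_ge_atTop 1] with M hM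
      have hM0 : (0:ℝ) < (M:ℝ) := by
        have : (1:ℝ) ≤ (M:ℝ) := by exact_mod_cast hM
        linarith
      rw [← Real.rpow_add hM0]
      have hexp : 1 - 1/(c:ℝ) + 1/(c:ℝ) = 1 := by ring
      rw [hexp, Real.rpow_one]
    exact h2.congr' h1 h3
  have hfin := hAB.trans_isLittleO hmain
  have hfin2 : (fun M : ℕ => (((a M + 1) * (b M + 4) : ℕ) : ℝ)) =o[atTop]
      (fun M : ℕ => (M:ℝ)) := by
    apply hfin.congr' _ EventuallyEq.rfl
    apply Filter.Eventually.of_forall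
    intro M
    push_cast
    ring
  have hd := hfin2.def (by norm_num : (0:ℝ) < 1)
  filter_upwards [hd] with M hMle
  have h1 : (((a M + 1) * (b M + 4) : ℕ) : ℝ) ≤ (M:ℝ) := by
    rw [Real.norm_eq_abs, Real.norm_eq_abs, abs_of_nonneg (by positivity),
      abs_of_nonneg (by positivity)] at hMle
    linarith
  exact_mod_cast h1

lemma m_tendsto (c : ℕ) (hc : 3 ≤ c) :
    Tendsto (fun p : ℕ => p ^ c - p) atTop atTop := by
  apply tendsto_atTop.mpr
  intro b0
  filter_upwards [eventually_ge_atTop (b0 + 2)] with p hp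
  have hp2 : 2 ≤ p := by omega
  have h1 : p * p ≤ p ^ c := by
    calc p * p = p ^ 2 := by ring
      _ ≤ p ^ c := Nat.pow_le_pow_right (by omega) (by omega)
  have h2 : 2 * p ≤ p * p := by
    apply Nat.mul_le_mul_right
    omega
  omega

end ReachHard

/-- **Reachability is BAPO-hard.** Fix an integer constant `c ≥ 3` and functions
`a, b : ℕ → ℕ` with `a(m) = o(m^{1/c} log m)` and `b(m) = o(m^{1 - 2/c})`. Then for
all sufficiently large `p`, writing `n = p^c` and `m = p^c - p`, there is no
`(a(m), b(m))`-BAPO solving `Reachability` on all instances consisting of the edge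
list of a directed graph with `n` nodes and `m` edges followed by a source and a
target node. Tokens are either edges `Sum.inl (i, j)` or nodes `Sum.inr i`. -/
theorem reachability_hard (c : ℕ) (hc : 3 ≤ c) (a b : ℕ → ℕ)
    (ha : (fun m : ℕ => (a m : ℝ)) =o[atTop]
      fun m : ℕ => (m : ℝ) ^ ((1 : ℝ) / (c : ℝ)) * Real.log m)
    (hb : (fun m : ℕ => (b m : ℝ)) =o[atTop]
      fun m : ℕ => (m : ℝ) ^ (1 - 2 / (c : ℝ))) :
    ∀ᶠ p in atTop,
      ¬ ∃ M : BAPO ((Fin (p ^ c) × Fin (p ^ c)) ⊕ Fin (p ^ c)) Bool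
            (a (p ^ c - p)) (b (p ^ c - p)),
        ∀ edges : List (Fin (p ^ c) × Fin (p ^ c)),
          edges.Nodup → edges.length = p ^ c - p →
          ∀ s t : Fin (p ^ c),
            (EdgeListReachable edges s t →
              M.SolvesOn (edges.map Sum.inl ++ [Sum.inr s, Sum.inr t]) true) ∧
            (¬ EdgeListReachable edges s t →
              M.SolvesOn (edges.map Sum.inl ++ [Sum.inr s, Sum.inr t]) false) := by
  have hev := (ReachHard.m_tendsto c hc).eventually (ReachHard.arith_evt c hc a b ha hb)
  filter_upwards [hev] with p hp
  rintro ⟨M, hMall⟩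
  have hcap : (a (p^c - p) + 1) * (b (p^c - p)) + (a (p^c - p) + 1) * 4 ≤ p^c - p := by
    rw [Nat.mul_add] at hp
    exact hp
  exact ReachHard.key (p^c) (p^c - p) (a (p^c-p)) (b (p^c-p)) (Nat.sub_le _ _) hcap M hMall
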